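/- Let n ≥ 1, s ≥ 1 be integers and d = s·n. Let π be a uniformly random permutation of {1,…,d}, and for each i ∈ {1,…,n} define the random matrix S_i := n·Σ_{j=s(i−1)+1}^{si} e_{π(j)} e_{π(j)}ᵀ ∈ ℝ^{d×d}. Then: (a) for every x ∈ ℝ^d and every i, E[S_i x] = x (unbiasedness); (b) for every x ∈ ℝ^d and every i, E[‖S_i x‖²] = n‖x‖²; and (c) for any vectors y_1,…,y_n ∈ ℝ^d, E[‖(1/n)Σ_{i=1}^n S_i y_i‖²] = (1/n)Σ_{i=1}^n ‖y_i‖², and hence also E[‖(1/n)Σ_{i=1}^n S_i y_i − (1/n)Σ_{i=1}^n y_i‖²] ≤ (1/n)Σ_{i=1}^n ‖y_i‖² − ‖(1/n)Σ_{i=1}^n y_i‖². -/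

import Mathlib

/-- The permutation sketch of FedP3: `S_i(π) = n ∑_{j∈block i} e_{π(j)} e_{π(j)}ᵀ`, applied
to a vector `v`, where block `i` consists of the `s` indices `s·i, …, s·i + s - 1`. -/
noncomputable def permSketch (n s d : ℕ) (π : Equiv.Perm (Fin d)) (i : Fin n)
    (v : EuclideanSpace ℝ (Fin d)) : EuclideanSpace ℝ (Fin d) :=
  (n : ℝ) • ∑ j ∈ Finset.univ.filter
      (fun j : Fin d => s * (i : ℕ) ≤ (j : ℕ) ∧ (j : ℕ) < s * ((i : ℕ) + 1)),
    v (π j) • EuclideanSpace.single (π j) (1 : ℝ)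

open Finset

lemma perm_fiber_card_eq {d : ℕ} (k j j' : Fin d) :
    (univ.filter (fun π : Equiv.Perm (Fin d) => π k = j)).card
      = (univ.filter (fun π : Equiv.Perm (Fin d) => π k = j')).card := by
  apply Finset.card_bij' (fun π _ => Equiv.swap j j' * π) (fun π _ => Equiv.swap j j' * π)
  · intro π hπ
    simp only [mem_filter, mem_univ, true_and] at hπ ⊢
    simp [Equiv.Perm.mul_apply, hπ]
  · intro π hπ
    simp only [mem_filter, mem_univ, true_and] at hπ ⊢
    simp [Equiv.Perm.mul_apply, hπ]
  · intro π _
    simp [← mul_assoc, Equiv.swap_mul_self]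
  · intro π _
    simp [← mul_assoc, Equiv.swap_mul_self]

lemma sum_perm_apply {d : ℕ} (k : Fin d) (g : Fin d → ℝ) :
    (d : ℝ) * ∑ π : Equiv.Perm (Fin d), g (π k)
      = (Fintype.card (Equiv.Perm (Fin d)) : ℝ) * ∑ j, g j := by
  have h1 : ∑ π : Equiv.Perm (Fin d), g (π k)
      = ∑ j : Fin d, ((univ.filter (fun π : Equiv.Perm (Fin d) => π k = j)).card : ℝ) * g j := by
    rw [← Finset.sum_fiberwise univ (fun π : Equiv.Perm (Fin d) => π k) (fun π => g (π k))]
    refine Finset.sum_congr rfl fun j _ => ?_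
    rw [Finset.sum_congr rfl (fun π hπ => by
      simp only [mem_filter, mem_univ, true_and] at hπ; rw [hπ]),
      Finset.sum_const, nsmul_eq_mul]
  have h3 : (Fintype.card (Equiv.Perm (Fin d)) : ℕ)
      = ∑ j : Fin d, (univ.filter (fun π : Equiv.Perm (Fin d) => π k = j)).card := by
    rw [← Finset.card_eq_sum_card_fiberwise (fun π _ => Finset.mem_univ _)]
    rfl
  have hall : ∀ j', (univ.filter (fun π : Equiv.Perm (Fin d) => π k = j')).card
      = (univ.filter (fun π : Equiv.Perm (Fin d) => π k = k)).card :=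
    fun j' => perm_fiber_card_eq k j' k
  have h2 : ∑ π : Equiv.Perm (Fin d), g (π k)
      = ((univ.filter (fun π : Equiv.Perm (Fin d) => π k = k)).card : ℝ) * ∑ j, g j := by
    rw [h1, Finset.sum_congr rfl fun j _ => by rw [hall j], ← Finset.mul_sum]
  have h4 : (Fintype.card (Equiv.Perm (Fin d)) : ℕ)
      = d * (univ.filter (fun π : Equiv.Perm (Fin d) => π k = k)).card := by
    rw [h3, Finset.sum_congr rfl fun j _ => hall j, Finset.sum_const, card_univ,
      Fintype.card_fin, smul_eq_mul]
  rw [h2, h4]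
  push_cast
  ring

lemma sum_perm_inv {d : ℕ} (k : Fin d) (g : Fin d → ℝ) :
    (d : ℝ) * ∑ π : Equiv.Perm (Fin d), g (π.symm k)
      = (Fintype.card (Equiv.Perm (Fin d)) : ℝ) * ∑ j, g j := by
  rw [← sum_perm_apply k g]
  congr 1
  exact Fintype.sum_equiv (Equiv.inv (Equiv.Perm (Fin d))) _ _ (fun π => rfl)

lemma div_block_iff {s : ℕ} (hs : 0 < s) (j i : ℕ) :
    j / s = i ↔ s * i ≤ j ∧ j < s * (i + 1) := by
  constructor
  · rintro rfl
    exact ⟨Nat.mul_div_le j s, Nat.lt_mul_div_succ j hs⟩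
  · rintro ⟨h1, h2⟩
    have hle : i ≤ j / s := (Nat.le_div_iff_mul_le hs).2 (by rwa [mul_comm])
    have hlt : j / s < i + 1 := Nat.div_lt_iff_lt_mul hs |>.2 (by rwa [mul_comm] at h2)
    omega

lemma block_card {n s : ℕ} (hs : 0 < s) {d : ℕ} (hd : d = s * n) (i : Fin n) :
    (univ.filter (fun j : Fin d => s * (i : ℕ) ≤ (j : ℕ) ∧ (j : ℕ) < s * ((i : ℕ) + 1))).card
      = s := by
  have hub : s * ((i : ℕ) + 1) ≤ d := by
    rw [hd]; exact Nat.mul_le_mul_left s i.isLt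
  rw [Finset.card_filter,
    Fin.sum_univ_eq_sum_range (fun m => if s * (i : ℕ) ≤ m ∧ m < s * ((i : ℕ) + 1) then 1 else 0) d,
    ← Finset.card_filter]
  have heq : Finset.filter (fun m => s * (i : ℕ) ≤ m ∧ m < s * ((i : ℕ) + 1)) (Finset.range d)
      = Finset.Ico (s * (i : ℕ)) (s * ((i : ℕ) + 1)) := by
    ext m
    simp only [Finset.mem_filter, Finset.mem_range, Finset.mem_Ico]
    exact ⟨fun h => h.2, fun h => ⟨lt_of_lt_of_le h.2 hub, h⟩⟩
  rw [heq, Nat.card_Ico, mul_add, mul_one, Nat.add_sub_cancel_left]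

lemma norm_sq_eq {d : ℕ} (x : EuclideanSpace ℝ (Fin d)) : ‖x‖ ^ 2 = ∑ k, (x k) ^ 2 := by
  rw [EuclideanSpace.norm_eq, Real.sq_sqrt (Finset.sum_nonneg fun k _ => sq_nonneg _)]
  simp [sq_abs]

lemma permSketch_apply (n s d : ℕ) (π : Equiv.Perm (Fin d)) (i : Fin n)
    (v : EuclideanSpace ℝ (Fin d)) (k : Fin d) :
    permSketch n s d π i v k
      = (n : ℝ) * (if s * (i : ℕ) ≤ ((π.symm k : Fin d) : ℕ) ∧
          ((π.symm k : Fin d) : ℕ) < s * ((i : ℕ) + 1) then v k else 0) := by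
  unfold permSketch
  rw [PiLp.smul_apply, smul_eq_mul]
  congr 1
  rw [WithLp.ofLp_sum, Finset.sum_apply]
  have : ∀ j ∈ univ.filter (fun j : Fin d => s * (i : ℕ) ≤ (j : ℕ) ∧ (j : ℕ) < s * ((i : ℕ) + 1)),
      (v (π j) • EuclideanSpace.single (π j) (1 : ℝ)) k
        = if j = π.symm k then v k else 0 := by
    intro j _
    rw [PiLp.smul_apply, EuclideanSpace.single_apply, smul_eq_mul]
    by_cases h : j = π.symm k
    · subst h
      rw [Equiv.apply_symm_apply]
      simp
    · rw [if_neg h, if_neg, mul_zero]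
      intro hk
      exact h (by rw [hk, Equiv.symm_apply_apply])
  rw [Finset.sum_congr rfl this, Finset.sum_ite_eq' _ (π.symm k) (fun _ => v k)]
  simp

lemma sum_ite_block {n s : ℕ} (hs : 0 < s) {d : ℕ} (hd : d = s * n) (i : Fin n) (c : ℝ) :
    ∑ j : Fin d, (if s * (i : ℕ) ≤ (j : ℕ) ∧ (j : ℕ) < s * ((i : ℕ) + 1) then c else 0)
      = s * c := by
  rw [← Finset.sum_filter, Finset.sum_const, block_card hs hd i, nsmul_eq_mul]

lemma sum_comp_block {n s : ℕ} (hs : 0 < s) {d : ℕ} (hd : d = s * n) (b : Fin d → Fin n)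
    (hb : ∀ j, ((b j : Fin n) : ℕ) = (j : ℕ) / s) (F : Fin n → ℝ) :
    ∑ j : Fin d, F (b j) = s * ∑ i, F i := by
  rw [← Finset.sum_fiberwise univ b (fun j => F (b j))]
  have hfib : ∀ i : Fin n, ∑ j ∈ univ.filter (fun j => b j = i), F (b j) = s * F i := by
    intro i
    have hset : univ.filter (fun j : Fin d => b j = i)
        = univ.filter (fun j : Fin d => s * (i : ℕ) ≤ (j : ℕ) ∧ (j : ℕ) < s * ((i : ℕ) + 1)) := by
      apply Finset.filter_congr
      intro j _
      rw [Fin.ext_iff, hb j, ← div_block_iff hs]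
    have hcard : (univ.filter (fun j : Fin d => b j = i)).card = s := by
      rw [hset, block_card hs hd i]
    rw [Finset.sum_congr rfl (fun j hj => by rw [(Finset.mem_filter.1 hj).2]),
      Finset.sum_const, hcard, nsmul_eq_mul]
  rw [Finset.sum_congr rfl fun i _ => hfib i, ← Finset.mul_sum]

/-- Unbiasedness and second-moment identities for the permutation sketches of FedP3, with
expectation over a uniformly random permutation `π` of `{1,…,d}`, `d = s·n`. -/
theorem permSketch_moments (n s : ℕ) (hn : 1 ≤ n) (hs : 1 ≤ s) (d : ℕ) (hd : d = s * n) :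
    (∀ (x : EuclideanSpace ℝ (Fin d)) (i : Fin n),
        (Fintype.card (Equiv.Perm (Fin d)) : ℝ)⁻¹ •
          ∑ π : Equiv.Perm (Fin d), permSketch n s d π i x = x) ∧
      (∀ (x : EuclideanSpace ℝ (Fin d)) (i : Fin n),
        (Fintype.card (Equiv.Perm (Fin d)) : ℝ)⁻¹ *
          ∑ π : Equiv.Perm (Fin d), ‖permSketch n s d π i x‖ ^ 2 = n * ‖x‖ ^ 2) ∧
      (∀ y : Fin n → EuclideanSpace ℝ (Fin d),
        (Fintype.card (Equiv.Perm (Fin d)) : ℝ)⁻¹ *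
            ∑ π : Equiv.Perm (Fin d), ‖(n : ℝ)⁻¹ • ∑ i, permSketch n s d π i (y i)‖ ^ 2 =
          (n : ℝ)⁻¹ * ∑ i, ‖y i‖ ^ 2 ∧
        (Fintype.card (Equiv.Perm (Fin d)) : ℝ)⁻¹ *
            ∑ π : Equiv.Perm (Fin d),
              ‖((n : ℝ)⁻¹ • ∑ i, permSketch n s d π i (y i)) - (n : ℝ)⁻¹ • ∑ i, y i‖ ^ 2 ≤
          (n : ℝ)⁻¹ * ∑ i, ‖y i‖ ^ 2 - ‖(n : ℝ)⁻¹ • ∑ i, y i‖ ^ 2) := by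
  have hs0 : 0 < s := hs
  have hn0 : 0 < n := hn
  have hd0 : 0 < d := by rw [hd]; exact Nat.mul_pos hs0 hn0
  have hdne : ((d : ℝ)) ≠ 0 := Nat.cast_ne_zero.2 hd0.ne'
  have hsne : ((s : ℝ)) ≠ 0 := Nat.cast_ne_zero.2 hs0.ne'
  have hnne : ((n : ℝ)) ≠ 0 := Nat.cast_ne_zero.2 hn0.ne'
  have hdr : (d : ℝ) = (s : ℝ) * (n : ℝ) := by rw [hd]; push_cast; ring
  have hNe : ((Fintype.card (Equiv.Perm (Fin d)) : ℝ)) ≠ 0 :=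
    Nat.cast_ne_zero.2 Fintype.card_ne_zero
  have hexp : ∀ (k : Fin d) (g : Fin d → ℝ),
      ∑ π : Equiv.Perm (Fin d), g (π.symm k)
        = (Fintype.card (Equiv.Perm (Fin d)) : ℝ) * (∑ j, g j) / d := by
    intro k g
    rw [eq_div_iff hdne]
    linear_combination sum_perm_inv k g
  have parta : ∀ (x : EuclideanSpace ℝ (Fin d)) (i : Fin n),
      (Fintype.card (Equiv.Perm (Fin d)) : ℝ)⁻¹ •
        ∑ π : Equiv.Perm (Fin d), permSketch n s d π i x = x := by
    intro x i
    ext k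
    rw [PiLp.smul_apply, smul_eq_mul,
      show (∑ π : Equiv.Perm (Fin d), permSketch n s d π i x) k
          = ∑ π : Equiv.Perm (Fin d), permSketch n s d π i x k from
        by rw [WithLp.ofLp_sum, Finset.sum_apply],
      Finset.sum_congr rfl fun π _ => permSketch_apply n s d π i x k,
      ← Finset.mul_sum,
      hexp k (fun j => if s * (i : ℕ) ≤ (j : ℕ) ∧ (j : ℕ) < s * ((i : ℕ) + 1) then x k else 0),
      sum_ite_block hs0 hd i (x k)]
    field_simp
    rw [hdr]
    push_cast
    ring
  have partb : ∀ (x : EuclideanSpace ℝ (Fin d)) (i : Fin n),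
      (Fintype.card (Equiv.Perm (Fin d)) : ℝ)⁻¹ *
        ∑ π : Equiv.Perm (Fin d), ‖permSketch n s d π i x‖ ^ 2 = n * ‖x‖ ^ 2 := by
    intro x i
    have hsq : ∀ π : Equiv.Perm (Fin d), ‖permSketch n s d π i x‖ ^ 2
        = ∑ k, (n : ℝ) ^ 2 * (if s * (i : ℕ) ≤ ((π.symm k : Fin d) : ℕ) ∧
            ((π.symm k : Fin d) : ℕ) < s * ((i : ℕ) + 1) then (x k) ^ 2 else 0) := by
      intro π
      rw [norm_sq_eq]
      refine Finset.sum_congr rfl fun k _ => ?_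
      rw [permSketch_apply]
      split_ifs <;> ring
    rw [Finset.sum_congr rfl fun π _ => hsq π, Finset.sum_comm,
      Finset.sum_congr rfl fun k (_ : k ∈ univ) => by
        rw [← Finset.mul_sum,
          hexp k (fun j => if s * (i : ℕ) ≤ (j : ℕ) ∧ (j : ℕ) < s * ((i : ℕ) + 1)
            then (x k) ^ 2 else 0),
          sum_ite_block hs0 hd i ((x k) ^ 2)],
      Finset.sum_congr rfl fun k (_ : k ∈ univ) => by
        rw [show (n : ℝ) ^ 2 * ((Fintype.card (Equiv.Perm (Fin d)) : ℝ) * ((s : ℝ) * (x k) ^ 2) / d)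
            = ((n : ℝ) ^ 2 * (Fintype.card (Equiv.Perm (Fin d)) : ℝ) * (s : ℝ) / d) * (x k) ^ 2
          from by ring],
      ← Finset.mul_sum, norm_sq_eq x]
    field_simp
    rw [hdr]
    ring
  refine ⟨parta, partb, ?_⟩
  intro y
  have hblt : ∀ j : Fin d, (j : ℕ) / s < n := by
    intro j
    have hj : (j : ℕ) < s * n := lt_of_lt_of_eq j.isLt hd
    exact (Nat.div_lt_iff_lt_mul hs0).2 (by rwa [mul_comm])
  set b : Fin d → Fin n := fun j => ⟨(j : ℕ) / s, hblt j⟩ with hbdef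
  have hb : ∀ j, ((b j : Fin n) : ℕ) = (j : ℕ) / s := fun j => rfl
  have hcoord : ∀ (π : Equiv.Perm (Fin d)) (k : Fin d),
      ((n : ℝ)⁻¹ • ∑ i, permSketch n s d π i (y i)) k = y (b (π.symm k)) k := by
    intro π k
    rw [PiLp.smul_apply, smul_eq_mul,
      show (∑ i, permSketch n s d π i (y i)) k = ∑ i, permSketch n s d π i (y i) k from
        by rw [WithLp.ofLp_sum, Finset.sum_apply],
      Finset.sum_congr rfl fun i _ => permSketch_apply n s d π i (y i) k]
    have hcond : ∀ i : Fin n,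
        (n : ℝ) * (if s * (i : ℕ) ≤ ((π.symm k : Fin d) : ℕ) ∧
            ((π.symm k : Fin d) : ℕ) < s * ((i : ℕ) + 1) then y i k else 0)
        = (n : ℝ) * (if i = b (π.symm k) then y i k else 0) := by
      intro i
      congr 1
      refine if_congr ?_ rfl rfl
      rw [Fin.ext_iff, hb, ← div_block_iff hs0]
      exact eq_comm
    rw [Finset.sum_congr rfl fun i _ => hcond i, ← Finset.mul_sum,
      Finset.sum_ite_eq' univ (b (π.symm k)) (fun i => y i k),
      if_pos (Finset.mem_univ _), inv_mul_cancel_left₀ hnne]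
  have hZ : ∀ π : Equiv.Perm (Fin d),
      ‖(n : ℝ)⁻¹ • ∑ i, permSketch n s d π i (y i)‖ ^ 2
        = ∑ k, (y (b (π.symm k)) k) ^ 2 := by
    intro π
    rw [norm_sq_eq]
    exact Finset.sum_congr rfl fun k _ => by rw [hcoord π k]
  have hc1 : (Fintype.card (Equiv.Perm (Fin d)) : ℝ)⁻¹ *
      ∑ π : Equiv.Perm (Fin d), ‖(n : ℝ)⁻¹ • ∑ i, permSketch n s d π i (y i)‖ ^ 2 =
      (n : ℝ)⁻¹ * ∑ i, ‖y i‖ ^ 2 := by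
    rw [Finset.sum_congr rfl fun π _ => hZ π, Finset.sum_comm,
      Finset.sum_congr rfl fun k (_ : k ∈ univ) => hexp k (fun j => (y (b j) k) ^ 2),
      Finset.sum_congr rfl fun k (_ : k ∈ univ) => by
        rw [show (Fintype.card (Equiv.Perm (Fin d)) : ℝ) * (∑ j, (y (b j) k) ^ 2) / d
            = ((Fintype.card (Equiv.Perm (Fin d)) : ℝ) / d) * ∑ j, (y (b j) k) ^ 2
          from by ring],
      ← Finset.mul_sum, Finset.sum_comm,
      Finset.sum_congr rfl fun j (_ : j ∈ univ) => (norm_sq_eq (y (b j))).symm,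
      sum_comp_block hs0 hd b hb (fun i => ‖y i‖ ^ 2)]
    field_simp
    rw [hdr]
    ring
  refine ⟨hc1, le_of_eq ?_⟩
  have hmean : (Fintype.card (Equiv.Perm (Fin d)) : ℝ)⁻¹ •
      ∑ π : Equiv.Perm (Fin d), ((n : ℝ)⁻¹ • ∑ i, permSketch n s d π i (y i))
      = (n : ℝ)⁻¹ • ∑ i, y i := by
    rw [← Finset.smul_sum, smul_comm, Finset.sum_comm, Finset.smul_sum]
    exact congrArg _ (Finset.sum_congr rfl fun i _ => parta (y i) i)
  have hinner : (Fintype.card (Equiv.Perm (Fin d)) : ℝ)⁻¹ *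
      ∑ π : Equiv.Perm (Fin d),
        (inner ℝ ((n : ℝ)⁻¹ • ∑ i, permSketch n s d π i (y i)) ((n : ℝ)⁻¹ • ∑ i, y i) : ℝ)
      = ‖(n : ℝ)⁻¹ • ∑ i, y i‖ ^ 2 := by
    rw [← sum_inner, ← real_inner_smul_left, hmean, real_inner_self_eq_norm_sq]
  have hsum : ∑ π : Equiv.Perm (Fin d),
        ‖((n : ℝ)⁻¹ • ∑ i, permSketch n s d π i (y i)) - (n : ℝ)⁻¹ • ∑ i, y i‖ ^ 2
      = (∑ π : Equiv.Perm (Fin d), ‖(n : ℝ)⁻¹ • ∑ i, permSketch n s d π i (y i)‖ ^ 2)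
        - 2 * (∑ π : Equiv.Perm (Fin d),
            (inner ℝ ((n : ℝ)⁻¹ • ∑ i, permSketch n s d π i (y i)) ((n : ℝ)⁻¹ • ∑ i, y i) : ℝ))
        + (Fintype.card (Equiv.Perm (Fin d)) : ℝ) * ‖(n : ℝ)⁻¹ • ∑ i, y i‖ ^ 2 := by
    rw [Finset.sum_congr rfl fun π _ =>
        norm_sub_sq_real ((n : ℝ)⁻¹ • ∑ i, permSketch n s d π i (y i)) ((n : ℝ)⁻¹ • ∑ i, y i),
      Finset.sum_add_distrib, Finset.sum_sub_distrib, ← Finset.mul_sum, Finset.sum_const,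
      card_univ, nsmul_eq_mul]
  have hNN : (Fintype.card (Equiv.Perm (Fin d)) : ℝ)⁻¹ *
      (Fintype.card (Equiv.Perm (Fin d)) : ℝ) = 1 := inv_mul_cancel₀ hNe
  linear_combination (Fintype.card (Equiv.Perm (Fin d)) : ℝ)⁻¹ * hsum + hc1 - 2 * hinner
    + ‖(n : ℝ)⁻¹ • ∑ i, y i‖ ^ 2 * hNN
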